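/- Let G be an (n,d,α,c⁻,c⁺)-expander graph with c⁻ < c⁺ and let ε > 0; set δ = ε/(c⁺ − c⁻). If X, Y ⊆ V satisfy X ⊆ Y, |Y| ≤ n/2 and (1 + δ)|X| ≥ |Y|, then (1 + c⁻ − ε)(d/n)|X||Yᶜ| ≤ e(X, Yᶜ) ≤ (1 + c⁺ + ε)(d/n)|X||Yᶜ|, where Yᶜ = V \ Y. -/

import Mathlib

open Finset

noncomputable def opNorm {n : ℕ} (M : Matrix (Fin n) (Fin n) ℝ) : ℝ :=
  ‖LinearMap.toContinuousLinearMap (Matrix.toEuclideanLin M)‖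

def onesMat (n : ℕ) : Matrix (Fin n) (Fin n) ℝ := Matrix.of fun _ _ => 1

def IsAdjMatrix {n : ℕ} (A : Matrix (Fin n) (Fin n) ℝ) : Prop :=
  A.IsSymm ∧ (∀ x y, A x y = 0 ∨ A x y = 1) ∧ ∀ x, A x x = 0

def IsEquilibrium {n : ℕ} (A : Matrix (Fin n) (Fin n) ℝ) (θ : Fin n → ℝ) : Prop :=
  ∀ y, ∑ x, A x y * Real.sin (θ x - θ y) = 0

def IsStable {n : ℕ} (A : Matrix (Fin n) (Fin n) ℝ) (θ : Fin n → ℝ) : Prop :=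
  IsEquilibrium A θ ∧
    ∀ f : Fin n → ℝ, 0 ≤ ∑ x, ∑ y, A x y * Real.cos (θ x - θ y) * (f x - f y) ^ 2

def FullySync {n : ℕ} (θ : Fin n → ℝ) : Prop :=
  ∀ x y, ∃ k : ℤ, θ x - θ y = 2 * Real.pi * k

def IsExpander {n : ℕ} (A : Matrix (Fin n) (Fin n) ℝ) (d α : ℝ) : Prop :=
  opNorm (A - (d / n) • onesMat n) ≤ α * d

noncomputable def lapCentered {n : ℕ} (A : Matrix (Fin n) (Fin n) ℝ) (d : ℝ) :
    Matrix (Fin n) (Fin n) ℝ :=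
  Matrix.diagonal (fun x => ∑ y, A x y) - A - d • (1 : Matrix (Fin n) (Fin n) ℝ)
    + (d / n) • onesMat n

def IsExpander5 {n : ℕ} (A : Matrix (Fin n) (Fin n) ℝ) (d α cm cp : ℝ) : Prop :=
  IsExpander A d α ∧
    (lapCentered A d - (cm * d) • (1 : Matrix (Fin n) (Fin n) ℝ)).PosSemidef ∧
    ((cp * d) • (1 : Matrix (Fin n) (Fin n) ℝ) - lapCentered A d).PosSemidef

noncomputable def daido {n : ℕ} (k : ℕ) (θ : Fin n → ℝ) : ℂ :=
  (n : ℂ)⁻¹ * ∑ x, Complex.exp (Complex.I * k * θ x)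

noncomputable def sFun (t : ℝ) : ℝ := if |t| ≤ Real.pi / 2 then Real.sin t ^ 2 else 1

noncomputable def Cset {n : ℕ} (θ : Fin n → ℝ) (ψ : ℝ) : Finset (Fin n) :=
  Finset.univ.filter fun x => ψ ≤ |θ x|

def eXY {n : ℕ} (A : Matrix (Fin n) (Fin n) ℝ) (X Y : Finset (Fin n)) : ℝ :=
  ∑ x ∈ X, ∑ y ∈ Y, A x y

noncomputable def kerK (a b : ℝ) : ℝ := Real.sin (|a| - min |b| (Real.pi / 2))

def matGraph {n : ℕ} (A : Matrix (Fin n) (Fin n) ℝ) : SimpleGraph (Fin n) where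
  Adj x y := x ≠ y ∧ A x y = 1 ∧ A y x = 1
  symm := ⟨fun _ _ h => ⟨h.1.symm, h.2.2, h.2.1⟩⟩
  loopless := ⟨fun _ ⟨h1, _⟩ => h1 rfl⟩

noncomputable def erMeasure (n : ℕ) (p : ℝ) (hp : p ≤ 1) :
    MeasureTheory.Measure ({e : Fin n × Fin n // e.1 < e.2} → Bool) :=
  MeasureTheory.Measure.pi fun _ =>
    (PMF.bernoulli (Real.toNNReal p) (Real.toNNReal_le_one.mpr hp)).toMeasure

def erAdj (n : ℕ) (ω : {e : Fin n × Fin n // e.1 < e.2} → Bool) :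
    Matrix (Fin n) (Fin n) ℝ :=
  Matrix.of fun x y =>
    if h : x < y then (if ω ⟨(x, y), h⟩ then 1 else 0)
    else if h : y < x then (if ω ⟨(y, x), h⟩ then 1 else 0) else 0

namespace ExpanderAux

open Matrix

variable {n : ℕ}

def indic (S : Finset (Fin n)) : Fin n → ℝ := fun x => if x ∈ S then 1 else 0

lemma sum_mul_indic (S : Finset (Fin n)) (f : Fin n → ℝ) :
    ∑ x, f x * indic S x = ∑ x ∈ S, f x := by
  simp [indic, mul_ite, Finset.sum_ite_mem]

lemma indic_dot_mulVec (M : Matrix (Fin n) (Fin n) ℝ) (S : Finset (Fin n)) :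
    dotProduct (indic S) (M *ᵥ indic S) = ∑ x ∈ S, ∑ y ∈ S, M x y := by
  unfold dotProduct mulVec
  calc ∑ x, indic S x * (fun y => M x y) ⬝ᵥ indic S
      = ∑ x, (∑ y ∈ S, M x y) * indic S x := by
        apply Finset.sum_congr rfl
        intro x _
        rw [mul_comm]
        congr 1
        exact sum_mul_indic S (fun y => M x y)
    _ = ∑ x ∈ S, ∑ y ∈ S, M x y := sum_mul_indic S _

lemma card_compl_real (S : Finset (Fin n)) : (Sᶜ.card : ℝ) = n - S.card := by
  rw [Finset.card_compl, Fintype.card_fin]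
  have := Finset.card_le_univ S
  rw [Nat.cast_sub (by simpa [Fintype.card_fin] using this)]

lemma quad (A : Matrix (Fin n) (Fin n) ℝ) (d : ℝ) (hn : 0 < n) (S : Finset (Fin n)) :
    dotProduct (indic S) (lapCentered A d *ᵥ indic S)
      = eXY A S Sᶜ - d / n * S.card * Sᶜ.card := by
  rw [indic_dot_mulVec]
  have hentry : ∀ x y : Fin n, lapCentered A d x y
      = ((if x = y then (∑ z, A x z) else 0) - A x y - (if x = y then d else 0)) + d / n := by
    intro x y
    simp [lapCentered, Matrix.sub_apply, Matrix.add_apply, Matrix.diagonal_apply,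
      Matrix.smul_apply, Matrix.one_apply, onesMat, mul_ite, mul_one, mul_zero]
  simp_rw [hentry]
  rw [Finset.sum_congr rfl (fun x _ => Finset.sum_add_distrib),
    Finset.sum_add_distrib]
  rw [Finset.sum_congr rfl (fun x _ => Finset.sum_sub_distrib _ _),
    Finset.sum_sub_distrib]
  rw [Finset.sum_congr rfl (fun x _ => Finset.sum_sub_distrib
      (fun y => if x = y then ∑ z, A x z else 0) (fun y => A x y)),
    Finset.sum_sub_distrib (fun x => ∑ y ∈ S, if x = y then ∑ z, A x z else 0)
      (fun x => ∑ y ∈ S, A x y)]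
  have h1 : ∑ x ∈ S, ∑ y ∈ S, (if x = y then (∑ z, A x z) else 0)
      = ∑ x ∈ S, ∑ z, A x z := by
    apply Finset.sum_congr rfl
    intro x hx
    rw [Finset.sum_ite_eq S x (fun _ => ∑ z, A x z), if_pos hx]
  have h2 : ∑ x ∈ S, ∑ y ∈ S, (if x = y then d else 0) = S.card * d := by
    rw [Finset.sum_congr rfl fun x hx =>
      (by rw [Finset.sum_ite_eq S x (fun _ => d), if_pos hx] :
        ∑ y ∈ S, (if x = y then d else 0) = d)]
    simp [mul_comm]
  have h3 : ∑ x ∈ S, ∑ z, A x z = eXY A S S + eXY A S Sᶜ := by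
    unfold eXY
    rw [← Finset.sum_add_distrib]
    apply Finset.sum_congr rfl
    intro x _
    exact (Finset.sum_add_sum_compl S _).symm
  have h4 : ∑ x ∈ S, ∑ _y ∈ S, (d / n : ℝ) = S.card * S.card * (d / n) := by
    simp [Finset.sum_const, nsmul_eq_mul]
    ring
  rw [h1, h2, h3, h4, card_compl_real]
  have hn' : (n : ℝ) ≠ 0 := Nat.cast_ne_zero.mpr hn.ne'
  unfold eXY
  field_simp
  ring

lemma colsum (A : Matrix (Fin n) (Fin n) ℝ) (d : ℝ) (hn : 0 < n) (hsym : A.IsSymm)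
    (y : Fin n) : ∑ x, lapCentered A d x y = 0 := by
  have hentry : ∀ x : Fin n, lapCentered A d x y
      = ((if x = y then (∑ z, A x z) else 0) - A x y - (if x = y then d else 0)) + d / n := by
    intro x
    simp [lapCentered, Matrix.sub_apply, Matrix.add_apply, Matrix.diagonal_apply,
      Matrix.smul_apply, Matrix.one_apply, onesMat, mul_ite, mul_one, mul_zero]
  simp_rw [hentry]
  rw [Finset.sum_add_distrib, Finset.sum_sub_distrib, Finset.sum_sub_distrib]
  have h1 : ∑ x, (if x = y then (∑ z, A x z) else 0) = ∑ z, A y z := by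
    rw [Finset.sum_ite_eq' Finset.univ y (fun x => ∑ z, A x z), if_pos (Finset.mem_univ y)]
  have h2 : ∑ x, A x y = ∑ z, A y z := by
    apply Finset.sum_congr rfl
    intro x _
    exact hsym.apply y x ▸ rfl
  have h3 : ∑ x : Fin n, (if x = y then d else 0) = d := by
    rw [Finset.sum_ite_eq' Finset.univ y (fun _ => d), if_pos (Finset.mem_univ y)]
  have h4 : ∑ _x : Fin n, (d / n : ℝ) = d := by
    have hn' : (n : ℝ) ≠ 0 := Nat.cast_ne_zero.mpr hn.ne'
    rw [Finset.sum_const]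
    simp [nsmul_eq_mul]
    field_simp
  rw [h1, h2, h3, h4]
  ring

lemma rowsum (A : Matrix (Fin n) (Fin n) ℝ) (d : ℝ) (hn : 0 < n) (x : Fin n) :
    ∑ y, lapCentered A d x y = 0 := by
  have hentry : ∀ y : Fin n, lapCentered A d x y
      = ((if x = y then (∑ z, A x z) else 0) - A x y - (if x = y then d else 0)) + d / n := by
    intro y
    simp [lapCentered, Matrix.sub_apply, Matrix.add_apply, Matrix.diagonal_apply,
      Matrix.smul_apply, Matrix.one_apply, onesMat, mul_ite, mul_one, mul_zero]
  simp_rw [hentry]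
  rw [Finset.sum_add_distrib, Finset.sum_sub_distrib, Finset.sum_sub_distrib]
  have h1 : ∑ y, (if x = y then (∑ z, A x z) else 0) = ∑ z, A x z := by
    rw [Finset.sum_ite_eq Finset.univ x (fun _ => ∑ z, A x z), if_pos (Finset.mem_univ x)]
  have h3 : ∑ y : Fin n, (if x = y then d else 0) = d := by
    rw [Finset.sum_ite_eq Finset.univ x (fun _ => d), if_pos (Finset.mem_univ x)]
  have h4 : ∑ _y : Fin n, (d / n : ℝ) = d := by
    have hn' : (n : ℝ) ≠ 0 := Nat.cast_ne_zero.mpr hn.ne'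
    rw [Finset.sum_const]
    simp [nsmul_eq_mul]
    field_simp
  rw [h1, h3, h4]
  ring

lemma mulVec_const (A : Matrix (Fin n) (Fin n) ℝ) (d : ℝ) (hn : 0 < n) (c : ℝ) :
    lapCentered A d *ᵥ (fun _ => c) = 0 := by
  funext x
  show ∑ y, lapCentered A d x y * c = 0
  rw [← Finset.sum_mul, rowsum A d hn x, zero_mul]

lemma quad_center (A : Matrix (Fin n) (Fin n) ℝ) (d : ℝ) (hn : 0 < n) (hsym : A.IsSymm)
    (S : Finset (Fin n)) (c : ℝ) :
    dotProduct (fun x => indic S x - c) (lapCentered A d *ᵥ (fun x => indic S x - c))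
      = dotProduct (indic S) (lapCentered A d *ᵥ indic S) := by
  set M := lapCentered A d with hM
  have hv : (fun x => indic S x - c) = indic S - (fun _ => c) := rfl
  rw [hv, Matrix.mulVec_sub, mulVec_const A d hn c, sub_zero, sub_dotProduct]
  have h2 : dotProduct (fun _ : Fin n => c) (M *ᵥ indic S) = 0 := by
    simp only [dotProduct, mulVec, dotProduct]
    rw [← Finset.mul_sum, Finset.sum_comm]
    have hz : ∀ y, ∑ x, M x y * indic S y = 0 := fun y => by
      have hc := colsum A d hn hsym y
      rw [← hM] at hc
      rw [← Finset.sum_mul, hc, zero_mul]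
    rw [Finset.sum_congr rfl fun y _ => hz y]
    simp
  rw [h2, sub_zero]

lemma norm_center (hn : 0 < n) (S : Finset (Fin n)) :
    dotProduct (fun x => indic S x - (S.card : ℝ) / n)
        (fun x => indic S x - (S.card : ℝ) / n)
      = S.card * Sᶜ.card / n := by
  have hn' : (n : ℝ) ≠ 0 := Nat.cast_ne_zero.mpr hn.ne'
  set c : ℝ := (S.card : ℝ) / n with hc
  have hsq : ∀ x : Fin n, (indic S x - c) * (indic S x - c)
      = (if x ∈ S then 1 - 2 * c else 0) + c ^ 2 := by
    intro x
    unfold indic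
    split <;> ring
  show ∑ x, (indic S x - c) * (indic S x - c) = _
  simp_rw [hsq]
  rw [Finset.sum_add_distrib, Finset.sum_ite_mem, Finset.univ_inter,
    Finset.sum_const, Finset.sum_const, card_compl_real]
  simp only [nsmul_eq_mul, smul_eq_mul, Finset.card_univ, Fintype.card_fin]
  rw [hc]
  field_simp
  ring

lemma psd_lower {A : Matrix (Fin n) (Fin n) ℝ} (hsym : A.IsSymm) {d c : ℝ} (hn : 0 < n)
    (h : (lapCentered A d - (c * d) • (1 : Matrix (Fin n) (Fin n) ℝ)).PosSemidef)
    (S : Finset (Fin n)) :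
    c * d * (S.card * Sᶜ.card / n) ≤ eXY A S Sᶜ - d / n * S.card * Sᶜ.card := by
  set w : Fin n → ℝ := fun x => indic S x - (S.card : ℝ) / n with hw
  have h0 := h.dotProduct_mulVec_nonneg w
  have hstar : star w = w := by
    funext x
    simp [star]
  rw [hstar, Matrix.sub_mulVec, Matrix.smul_mulVec, Matrix.one_mulVec,
    dotProduct_sub, dotProduct_smul] at h0
  rw [hw] at h0
  rw [quad_center A d hn hsym S _, quad A d hn S, norm_center hn S] at h0
  simp only [smul_eq_mul] at h0
  linarith

lemma psd_upper {A : Matrix (Fin n) (Fin n) ℝ} (hsym : A.IsSymm) {d c : ℝ} (hn : 0 < n)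
    (h : ((c * d) • (1 : Matrix (Fin n) (Fin n) ℝ) - lapCentered A d).PosSemidef)
    (S : Finset (Fin n)) :
    eXY A S Sᶜ - d / n * S.card * Sᶜ.card ≤ c * d * (S.card * Sᶜ.card / n) := by
  set w : Fin n → ℝ := fun x => indic S x - (S.card : ℝ) / n with hw
  have h0 := h.dotProduct_mulVec_nonneg w
  have hstar : star w = w := by
    funext x
    simp [star]
  rw [hstar, Matrix.sub_mulVec, Matrix.smul_mulVec, Matrix.one_mulVec,
    dotProduct_sub, dotProduct_smul] at h0
  rw [hw] at h0
  rw [quad_center A d hn hsym S _, quad A d hn S, norm_center hn S] at h0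
  simp only [smul_eq_mul] at h0
  linarith

lemma conv_lower (k d N w e c : ℝ) (hk : d / N = k)
    (h : c * d * (w / N) ≤ e - d / N * w) : (1 + c) * k * w ≤ e := by
  rw [hk] at h
  have h2 : c * d * (w / N) = c * k * w := by rw [← hk]; ring
  rw [h2] at h
  linarith

lemma conv_upper (k d N w e c : ℝ) (hk : d / N = k)
    (h : e - d / N * w ≤ c * d * (w / N)) : e ≤ (1 + c) * k * w := by
  rw [hk] at h
  have h2 : c * d * (w / N) = c * k * w := by rw [← hk]; ring
  rw [h2] at h
  linarith

lemma eXY_union_right (A : Matrix (Fin n) (Fin n) ℝ) (S T₁ T₂ : Finset (Fin n))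
    (h : Disjoint T₁ T₂) : eXY A S (T₁ ∪ T₂) = eXY A S T₁ + eXY A S T₂ := by
  unfold eXY
  rw [← Finset.sum_add_distrib]
  exact Finset.sum_congr rfl fun x _ => Finset.sum_union h

lemma eXY_union_left (A : Matrix (Fin n) (Fin n) ℝ) (S₁ S₂ T : Finset (Fin n))
    (h : Disjoint S₁ S₂) : eXY A (S₁ ∪ S₂) T = eXY A S₁ T + eXY A S₂ T :=
  Finset.sum_union h

lemma eXY_comm (A : Matrix (Fin n) (Fin n) ℝ) (hsym : A.IsSymm) (S T : Finset (Fin n)) :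
    eXY A S T = eXY A T S := by
  unfold eXY
  refine Finset.sum_comm.trans ?_
  exact Finset.sum_congr rfl fun y _ => Finset.sum_congr rfl fun x _ => (hsym.apply x y).symm

end ExpanderAux

open ExpanderAux

theorem expander_mixing_nested {n : ℕ} (A : Matrix (Fin n) (Fin n) ℝ)
    (hA : IsAdjMatrix A) (d α cm cp : ℝ) (hd : 0 < d) (hα : 0 < α)
    (hlt : cm < cp) (hexp : IsExpander5 A d α cm cp)
    (ε : ℝ) (hε : 0 < ε) (X Y : Finset (Fin n)) (hXY : X ⊆ Y)
    (hY : (Y.card : ℝ) ≤ n / 2)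
    (hsize : (1 + ε / (cp - cm)) * X.card ≥ (Y.card : ℝ)) :
    (1 + cm - ε) * (d / n) * X.card * Yᶜ.card ≤ eXY A X Yᶜ ∧
      eXY A X Yᶜ ≤ (1 + cp + ε) * (d / n) * X.card * Yᶜ.card := by
  obtain ⟨hsymA, -, -⟩ := hA
  obtain ⟨-, hpsd1, hpsd2⟩ := hexp
  rcases Nat.eq_zero_or_pos n with hn | hn
  · subst hn
    have hXe : X = ∅ := Finset.eq_empty_of_isEmpty X
    simp [hXe, eXY]
  · -- main case
    set Z := Y \ X with hZdef
    have hdisjXZ : Disjoint X Z := Finset.disjoint_sdiff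
    have hXZ : X ∪ Z = Y := Finset.union_sdiff_of_subset hXY
    have hZY : Z ⊆ Y := Finset.sdiff_subset
    have hdisjZYc : Disjoint Z Yᶜ := disjoint_compl_right.mono_left hZY
    have hdisjXYc : Disjoint X Yᶜ := disjoint_compl_right.mono_left hXY
    have hXc : Xᶜ = Z ∪ Yᶜ := by
      ext x
      simp only [Finset.mem_compl, hZdef, Finset.mem_union, Finset.mem_sdiff]
      have := @hXY x
      tauto
    have hZc : Zᶜ = X ∪ Yᶜ := by
      ext x
      simp only [Finset.mem_compl, hZdef, Finset.mem_union, Finset.mem_sdiff]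
      have := @hXY x
      tauto
    have h_eX : eXY A X Xᶜ = eXY A X Z + eXY A X Yᶜ := by
      rw [hXc, eXY_union_right A X Z Yᶜ hdisjZYc]
    have h_eZ : eXY A Z Zᶜ = eXY A Z X + eXY A Z Yᶜ := by
      rw [hZc, eXY_union_right A Z X Yᶜ hdisjXYc]
    have h_eY : eXY A Y Yᶜ = eXY A X Yᶜ + eXY A Z Yᶜ := by
      have h' : eXY A (X ∪ Z) Yᶜ = eXY A X Yᶜ + eXY A Z Yᶜ :=
        eXY_union_left A X Z Yᶜ hdisjXZ
      rw [hXZ] at h'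
      exact h'
    have h_comm : eXY A X Z = eXY A Z X := eXY_comm A hsymA X Z
    have h2e : 2 * eXY A X Yᶜ = eXY A X Xᶜ + eXY A Y Yᶜ - eXY A Z Zᶜ := by
      linarith
    -- real abbreviations
    set N : ℝ := (n : ℝ) with hN
    have hN0 : 0 < N := by positivity
    set a : ℝ := (X.card : ℝ) with ha
    set y : ℝ := (Y.card : ℝ) with hy
    have hay : a ≤ y := by
      rw [ha, hy]
      exact_mod_cast Finset.card_le_card hXY
    have ha0 : 0 ≤ a := by rw [ha]; positivity
    have hzc : ((Z.card : ℝ)) = y - a := by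
      rw [hZdef, Finset.card_sdiff_of_subset hXY, hy, ha]
      rw [Nat.cast_sub (Finset.card_le_card hXY)]
    have hXcc : ((Xᶜ.card : ℝ)) = N - a := card_compl_real X
    have hYcc : ((Yᶜ.card : ℝ)) = N - y := card_compl_real Y
    have hZcc : ((Zᶜ.card : ℝ)) = N - (y - a) := by
      rw [card_compl_real Z, hzc]
    -- the six spectral bounds
    have hX1 := psd_lower hsymA hn hpsd1 X
    have hX2 := psd_upper hsymA hn hpsd2 X
    have hY1 := psd_lower hsymA hn hpsd1 Y
    have hY2 := psd_upper hsymA hn hpsd2 Y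
    have hZ1 := psd_lower hsymA hn hpsd1 Z
    have hZ2 := psd_upper hsymA hn hpsd2 Z
    rw [hXcc] at hX1 hX2
    rw [hYcc] at hY1 hY2
    rw [hZcc, hzc] at hZ1 hZ2
    rw [← ha] at hX1 hX2
    rw [← hy] at hY1 hY2
    rw [← hN] at hX1 hX2 hY1 hY2 hZ1 hZ2
    -- size hypothesis
    have hcc : (0 : ℝ) < cp - cm := sub_pos.mpr hlt
    have hz' : (cp - cm) * (y - a) ≤ ε * a := by
      have h1 : y - a ≤ ε / (cp - cm) * a := by linarith
      have h2 : (cp - cm) * (y - a) ≤ (cp - cm) * (ε / (cp - cm) * a) :=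
        mul_le_mul_of_nonneg_left h1 hcc.le
      have h3 : (cp - cm) * (ε / (cp - cm) * a) = ε * a := by
        field_simp
      linarith
    have hza : 0 ≤ y - a := by linarith
    have hyN : y ≤ N / 2 := hY
    have hkey : (cp - cm) * ((y - a) * (N - (y - a))) ≤ 2 * ε * (a * (N - y)) := by
      have k1 := mul_le_mul_of_nonneg_right hz' (show (0:ℝ) ≤ N - (y - a) by linarith)
      have k2 := mul_le_mul_of_nonneg_left (show N - (y - a) ≤ 2 * (N - y) by linarith)
          (mul_nonneg hε.le ha0)
      linarith [k1, k2]
    obtain ⟨k, hk⟩ : ∃ k, d / N = k := ⟨d / N, rfl⟩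
    have hk0 : (0 : ℝ) ≤ k := by rw [← hk]; positivity
    have HX1 : (1 + cm) * k * (a * (N - a)) ≤ eXY A X Xᶜ := by
      refine conv_lower k d N _ _ cm hk ?_
      linarith [hX1]
    have HX2 : eXY A X Xᶜ ≤ (1 + cp) * k * (a * (N - a)) := by
      refine conv_upper k d N _ _ cp hk ?_
      linarith [hX2]
    have HY1 : (1 + cm) * k * (y * (N - y)) ≤ eXY A Y Yᶜ := by
      refine conv_lower k d N _ _ cm hk ?_
      linarith [hY1]
    have HY2 : eXY A Y Yᶜ ≤ (1 + cp) * k * (y * (N - y)) := by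
      refine conv_upper k d N _ _ cp hk ?_
      linarith [hY2]
    have HZ1 : (1 + cm) * k * ((y - a) * (N - (y - a))) ≤ eXY A Z Zᶜ := by
      refine conv_lower k d N _ _ cm hk ?_
      linarith [hZ1]
    have HZ2 : eXY A Z Zᶜ ≤ (1 + cp) * k * ((y - a) * (N - (y - a))) := by
      refine conv_upper k d N _ _ cp hk ?_
      linarith [hZ2]
    have hkey' := mul_le_mul_of_nonneg_left hkey hk0
    rw [hYcc, hk]
    constructor
    · linarith [HX1, HY1, HZ2, hkey']
    · linarith [HX2, HY2, HZ1, hkey']
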